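/- Let K ≥ 2, γ₁, γ₂ > 0 with γ₁ − γ₂(1 + (1−K)/K·α) > 0 and α < 0. Setting q = p_y/(p_y + (K−1)p_other) with p_y = γ₁ − γ₂(1 + (1−K)/K·α) and p_other = −γ₂α/K, the induced symmetric label mechanism satisfies ε-Label-LDP with ε = |log( K/α·(1 − γ₁/γ₂) + 1 − K )|. -/
import Mathlib

lemma exp_abs_log_bounds {R : ℝ} (hR : 0 < R) :
    R ≤ Real.exp |Real.log R| ∧ R⁻¹ ≤ Real.exp |Real.log R| ∧
      (1:ℝ) ≤ Real.exp |Real.log R| := by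
  have h1 : R ≤ Real.exp |Real.log R| := by
    calc R = Real.exp (Real.log R) := (Real.exp_log hR).symm
    _ ≤ Real.exp |Real.log R| := Real.exp_le_exp.mpr (le_abs_self _)
  have h2 : R⁻¹ ≤ Real.exp |Real.log R| := by
    calc R⁻¹ = Real.exp (-(Real.log R)) := by rw [Real.exp_neg, Real.exp_log hR]
    _ ≤ Real.exp |Real.log R| := Real.exp_le_exp.mpr (neg_le_abs _)
  exact ⟨h1, h2, Real.one_le_exp (abs_nonneg _)⟩

theorem unlearning_label_ldp (K : ℕ) (hK : 2 ≤ K) (γ₁ γ₂ α : ℝ)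
    (hγ₁ : 0 < γ₁) (hγ₂ : 0 < γ₂) (hα : α < 0)
    (hpos : 0 < γ₁ - γ₂ * (1 + (1 - (K : ℝ)) / K * α))
    (py pother q : ℝ)
    (hpy : py = γ₁ - γ₂ * (1 + (1 - (K : ℝ)) / K * α))
    (hpother : pother = -γ₂ * α / K)
    (hq : q = py / (py + (K - 1) * pother))
    (M : Fin K → Fin K → ℝ)
    (hM : ∀ y ypred : Fin K, M y ypred = if ypred = y then q else (1 - q) / (K - 1)) :
    ∀ y y' ypred : Fin K,
      M y ypred / M y' ypred
        ≤ Real.exp |Real.log ((K : ℝ) / α * (1 - γ₁ / γ₂) + 1 - K)| := by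
  have hK2 : (2:ℝ) ≤ (K:ℝ) := by exact_mod_cast hK
  have hK0 : (K:ℝ) ≠ 0 := by linarith
  have hK1 : (K:ℝ) - 1 > 0 := by linarith
  have hpyp : 0 < py := by rw [hpy]; exact hpos
  have hpop : 0 < pother := by
    rw [hpother]
    apply div_pos
    · nlinarith
    · linarith
  have hS : 0 < py + (K - 1) * pother := by positivity
  have hqval : q = py / (py + (K - 1) * pother) := hq
  have h1q : (1 - q) / ((K:ℝ) - 1) = pother / (py + (K - 1) * pother) := by
    rw [hq]; field_simp; ring
  set R : ℝ := (K : ℝ) / α * (1 - γ₁ / γ₂) + 1 - K with hR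
  have hγ₂0 : γ₂ ≠ 0 := ne_of_gt hγ₂
  have hα0 : α ≠ 0 := ne_of_lt hα
  have hRval : R = py / pother := by
    rw [hR, eq_div_iff (ne_of_gt hpop), hpy, hpother]
    field_simp
    ring
  have hRpos : 0 < R := hRval ▸ div_pos hpyp hpop
  obtain ⟨hb1, hb2, hb3⟩ := exp_abs_log_bounds hRpos
  intro y y' ypred
  rw [hM, hM]
  have hq0 : q ≠ 0 := by rw [hqval]; positivity
  have h1q0 : (1 - q) / ((K:ℝ) - 1) ≠ 0 := by rw [h1q]; positivity
  by_cases h1 : ypred = y <;> by_cases h2 : ypred = y'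
  · rw [if_pos h1, if_pos h2, div_self hq0]; exact hb3
  · rw [if_pos h1, if_neg h2, h1q, hqval, div_div_div_eq, mul_comm (py + ((K:ℝ) - 1) * pother), mul_div_mul_right _ _ (ne_of_gt hS)]
    exact hRval ▸ hb1
  · rw [if_neg h1, if_pos h2, h1q, hqval, div_div_div_eq, mul_comm (py + ((K:ℝ) - 1) * pother), mul_div_mul_right _ _ (ne_of_gt hS)]
    calc pother / py = R⁻¹ := by rw [hRval, inv_div]
    _ ≤ _ := hb2
  · rw [if_neg h1, if_neg h2, div_self h1q0]; exact hb3
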